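/- Let ν ≥ 0 and c ∈ (0, 1]. Let τ : [0, ∞) → ℝ be continuously differentiable with τ(0) = 1, 0 ≤ τ'(t) ≤ 1 and τ(t) ≥ c(1 + t) for all t ≥ 0. Let E : [0, ∞) → [0, ∞) be differentiable and satisfy E'(t) ≤ −(τ'(t)/τ(t)) E(t) + 2ν (τ'(t)/τ(t))² for all t ≥ 0. Then there exists a constant C > 0, depending only on E(0), ν and c, such that E(t) ≤ C (1 + t)^(−1) (1 + ν log(1 + t)) for all t ≥ 0. -/

import Mathlib

/-- Gronwall-type integration of the pseudo-energy inequality, case `α = 1`: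
if `E' ≤ -(τ'/τ) E + 2ν (τ'/τ)²`, then `E(t) ≤ C (1+t)^{-1}(1 + ν log(1+t))`. -/
theorem pseudo_energy_decay_eq_one (ν c : ℝ) (hν : 0 ≤ ν) (hc : 0 < c) (hc1 : c ≤ 1)
    (τ τ' E E' : ℝ → ℝ)
    (hτ0 : τ 0 = 1)
    (hτd : ∀ t ≥ (0 : ℝ), HasDerivAt τ (τ' t) t)
    (hτ'cont : ContinuousOn τ' (Set.Ici 0))
    (hτ'nonneg : ∀ t ≥ (0 : ℝ), 0 ≤ τ' t)
    (hτ'le : ∀ t ≥ (0 : ℝ), τ' t ≤ 1)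
    (hτlb : ∀ t ≥ (0 : ℝ), c * (1 + t) ≤ τ t)
    (hEnonneg : ∀ t ≥ (0 : ℝ), 0 ≤ E t)
    (hEd : ∀ t ≥ (0 : ℝ), HasDerivAt E (E' t) t)
    (hineq : ∀ t ≥ (0 : ℝ), E' t ≤ -(τ' t / τ t) * E t + 2 * ν * (τ' t / τ t) ^ 2) :
    ∃ C > 0, ∀ t ≥ (0 : ℝ), E t ≤ C * (1 + t)⁻¹ * (1 + ν * Real.log (1 + t)) := by
  have hτpos : ∀ t ≥ (0 : ℝ), 0 < τ t := fun t ht => by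
    have := hτlb t ht
    nlinarith
  -- τ t ≤ 1 + t
  have hτub : ∀ t ≥ (0 : ℝ), τ t ≤ 1 + t := by
    have hanti : AntitoneOn (fun t => τ t - t) (Set.Ici 0) := by
      have hd : ∀ t ∈ Set.Ici (0:ℝ), HasDerivAt (fun t => τ t - t) (τ' t - 1) t := by
        intro t ht
        exact (hτd t ht).sub (hasDerivAt_id' t)
      refine antitoneOn_of_deriv_nonpos (convex_Ici 0) ?_ ?_ ?_
      · exact fun t ht => ((hd t ht).continuousAt).continuousWithinAt
      · intro t ht
        rw [interior_Ici, Set.mem_Ioi] at ht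
        exact ((hd t (Set.mem_Ici.mpr (le_of_lt ht))).differentiableAt).differentiableWithinAt
      · intro t ht
        rw [interior_Ici, Set.mem_Ioi] at ht
        rw [(hd t (Set.mem_Ici.mpr (le_of_lt ht))).deriv]
        linarith [hτ'le t (le_of_lt ht)]
    intro t ht
    have := hanti (Set.self_mem_Ici) ht ht
    simp only [hτ0] at this
    linarith
  -- G = τE - 2ν log τ is antitone
  set G : ℝ → ℝ := fun t => τ t * E t - 2 * ν * Real.log (τ t) with hG
  have hGd : ∀ t ∈ Set.Ici (0:ℝ), HasDerivAt G
      (τ' t * E t + τ t * E' t - 2 * ν * (τ' t / τ t)) t := by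
    intro t ht
    exact ((hτd t ht).mul (hEd t ht)).sub
      (((hτd t ht).log (hτpos t ht).ne').const_mul (2 * ν))
  have hGanti : AntitoneOn G (Set.Ici 0) := by
    refine antitoneOn_of_deriv_nonpos (convex_Ici 0) ?_ ?_ ?_
    · exact fun t ht => ((hGd t ht).continuousAt).continuousWithinAt
    · intro t ht
      rw [interior_Ici, Set.mem_Ioi] at ht
      exact ((hGd t (Set.mem_Ici.mpr (le_of_lt ht))).differentiableAt).differentiableWithinAt
    · intro t ht
      rw [interior_Ici, Set.mem_Ioi] at ht
      have ht' := le_of_lt ht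
      rw [(hGd t ht').deriv]
      have hτp := hτpos t ht'
      have h1 := hineq t ht'
      have h2 := hτ'nonneg t ht'
      have h3 := hτ'le t ht'
      have key : τ t * E' t ≤ -(τ' t * E t) + 2 * ν * (τ' t)^2 / τ t := by
        have := mul_le_mul_of_nonneg_left h1 hτp.le
        calc τ t * E' t ≤ τ t * (-(τ' t / τ t) * E t + 2 * ν * (τ' t / τ t) ^ 2) := this
          _ = -(τ' t * E t) + 2 * ν * (τ' t)^2 / τ t := by
              field_simp
      have h4 : 2 * ν * (τ' t)^2 / τ t ≤ 2 * ν * (τ' t / τ t) := by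
        rw [div_le_iff₀ hτp]
        have : (τ' t)^2 ≤ τ' t := by nlinarith
        calc 2 * ν * (τ' t)^2 ≤ 2 * ν * τ' t := by nlinarith
          _ = 2 * ν * (τ' t / τ t) * τ t := by field_simp
      linarith
  -- So τ t * E t ≤ E 0 + 2ν log (τ t)
  have hbound : ∀ t ≥ (0:ℝ), τ t * E t ≤ E 0 + 2 * ν * Real.log (1 + t) := by
    intro t ht
    have h := hGanti Set.self_mem_Ici ht ht
    simp only [hG, hτ0, Real.log_one, mul_zero, sub_zero, one_mul] at h
    have hlog : Real.log (τ t) ≤ Real.log (1 + t) :=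
      Real.log_le_log (hτpos t ht) (hτub t ht)
    nlinarith [hν]
  have hE0 := hEnonneg 0 le_rfl
  refine ⟨(E 0 + 2) / c, by positivity, ?_⟩
  intro t ht
  have h1t : (0:ℝ) < 1 + t := by linarith
  have hlognn : 0 ≤ Real.log (1 + t) := Real.log_nonneg (by linarith)
  have hτp := hτpos t ht
  have hEt := hEnonneg t ht
  have hb := hbound t ht
  have hlb := hτlb t ht
  have key : (1 + t) * E t ≤ (E 0 + 2) / c * (1 + ν * Real.log (1 + t)) := by
    have h5 : c * ((1 + t) * E t) ≤ τ t * E t := by nlinarith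
    have h6 : E 0 + 2 * ν * Real.log (1 + t) ≤ (E 0 + 2) * (1 + ν * Real.log (1 + t)) := by
      nlinarith [mul_nonneg hE0 (mul_nonneg hν hlognn)]
    rw [div_mul_eq_mul_div, le_div_iff₀ hc]
    nlinarith
  calc E t = (1 + t)⁻¹ * ((1 + t) * E t) := by field_simp
    _ ≤ (1 + t)⁻¹ * ((E 0 + 2) / c * (1 + ν * Real.log (1 + t))) := by
        apply mul_le_mul_of_nonneg_left key (by positivity)
    _ = (E 0 + 2) / c * (1 + t)⁻¹ * (1 + ν * Real.log (1 + t)) := by ring
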